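/- arXiv:2509.16872 — 8 statements merged into one kernel-verified Lean document; each statement's English description precedes it below -/
import Mathlib

section
/- The determinant of any square Petrie matrix (a 0-1 matrix in which the ones in each row occur consecutively) is equal to -1, 0, or 1. -/
lemma sumInd (m a : ℕ) :
    (∑ j : Fin m, (if (j : ℕ) = a then (1 : ℤ) else 0)) = if a < m then 1 else 0 := by
  rw [Fin.sum_univ_eq_sum_range (fun j => if j = a then (1 : ℤ) else 0)]
  rw [Finset.sum_ite_eq' (Finset.range m) a (fun _ => (1 : ℤ))]
  simp [Finset.mem_range]

lemma indShift (k : ℕ) (c : Fin (k + 1)) (t : ℕ) :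
    ∃ t', ∀ j : Fin k,
      (if ((c.succAbove j : ℕ) = t) then (1 : ℤ) else 0) =
      if (j : ℕ) = t' then 1 else 0 := by
  by_cases h : ∃ j0 : Fin k, (c.succAbove j0 : ℕ) = t
  · obtain ⟨j0, hj0⟩ := h
    refine ⟨(j0 : ℕ), fun j => ?_⟩
    congr 1
    simp only [eq_iff_iff]
    constructor
    · intro hj
      have : c.succAbove j = c.succAbove j0 := Fin.ext (hj.trans hj0.symm)
      exact congrArg _ ((Fin.succAbove_right_injective (p := c)) this)
    · intro hj
      have : j = j0 := Fin.ext hj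
      rw [this, hj0]
  · refine ⟨k, fun j => ?_⟩
    rw [if_neg (fun hj => h ⟨j, hj⟩), if_neg (by omega)]

lemma aux : ∀ (m : ℕ) (A : Matrix (Fin m) (Fin m) ℤ),
    (∀ i, ∃ a b : ℕ, ∀ j : Fin m, A i j =
      (if (j : ℕ) = a then 1 else 0) - (if (j : ℕ) = b then 1 else 0)) →
    A.det = -1 ∨ A.det = 0 ∨ A.det = 1 := by
  intro m
  induction m with
  | zero =>
    intro A _
    right; right
    simp [Matrix.det_fin_zero]
  | succ k ih =>
    intro A hA
    choose a b hab using hA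
    by_cases hC : ∀ i, (a i < k + 1 ↔ b i < k + 1)
    · -- every row sums to zero, so det = 0
      right; left
      rw [← Matrix.exists_mulVec_eq_zero_iff]
      refine ⟨(fun _ => (1 : ℤ)), ?_, ?_⟩
      · intro h
        have := congrFun h 0
        simp at this
      · funext i
        have : ∑ j, A i j = 0 := by
          calc ∑ j, A i j
              = ∑ j : Fin (k+1), ((if (j : ℕ) = a i then (1:ℤ) else 0)
                - (if (j : ℕ) = b i then 1 else 0)) := by
                exact Finset.sum_congr rfl fun j _ => hab i j
            _ = (if a i < k + 1 then (1:ℤ) else 0) - (if b i < k + 1 then 1 else 0) := by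
                rw [Finset.sum_sub_distrib, sumInd, sumInd]
            _ = 0 := by
                rcases (hC i) with ⟨h1, h2⟩
                by_cases h : a i < k + 1
                · rw [if_pos h, if_pos (h1 h)]; ring
                · rw [if_neg h, if_neg (fun hb => h (h2 hb))]; ring
        simpa [Matrix.mulVec, dotProduct] using this
    · push_neg at hC
      obtain ⟨i, hi⟩ := hC
      -- row i has exactly one nonzero entry
      have key : ∃ (c : Fin (k+1)) (ε : ℤ), (ε = 1 ∨ ε = -1) ∧
          ∀ j, A i j = if j = c then ε else 0 := by
        rcases hi with ⟨ha, hb⟩ | ⟨ha, hb⟩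
        · refine ⟨⟨a i, ha⟩, 1, Or.inl rfl, fun j => ?_⟩
          have hj := j.isLt
          rw [hab i j]
          simp only [Fin.ext_iff, Fin.val_mk]
          split_ifs <;> omega
        · refine ⟨⟨b i, hb⟩, -1, Or.inr rfl, fun j => ?_⟩
          have hj := j.isLt
          rw [hab i j]
          simp only [Fin.ext_iff, Fin.val_mk]
          split_ifs <;> omega
      obtain ⟨c, ε, hε, hrow⟩ := key
      have hdet : A.det = (-1) ^ ((i : ℕ) + (c : ℕ)) * ε *
          (A.submatrix i.succAbove c.succAbove).det := by
        rw [Matrix.det_succ_row A i]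
        rw [Finset.sum_eq_single c]
        · rw [hrow c, if_pos rfl]
        · intro j _ hj
          rw [hrow j, if_neg hj]
          ring
        · intro h
          exact absurd (Finset.mem_univ c) h
      have hminor : (A.submatrix i.succAbove c.succAbove).det = -1 ∨
          (A.submatrix i.succAbove c.succAbove).det = 0 ∨
          (A.submatrix i.succAbove c.succAbove).det = 1 := by
        apply ih
        intro r
        obtain ⟨a', ha'⟩ := indShift k c (a (i.succAbove r))
        obtain ⟨b', hb'⟩ := indShift k c (b (i.succAbove r))
        refine ⟨a', b', fun j => ?_⟩
        simp only [Matrix.submatrix_apply]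
        rw [hab (i.succAbove r) (c.succAbove j), ha' j, hb' j]
      have hsign : ((-1 : ℤ)) ^ ((i : ℕ) + (c : ℕ)) = 1 ∨
          ((-1 : ℤ)) ^ ((i : ℕ) + (c : ℕ)) = -1 := neg_one_pow_eq_or ℤ _
      rcases hsign with hs | hs <;> rcases hε with he | he <;>
        rcases hminor with hm | hm | hm <;>
        rw [hdet, hs, he, hm] <;> norm_num

/-- The determinant of any square Petrie matrix (a 0-1 matrix in which the ones
in each row occur consecutively) is `-1`, `0`, or `1`. -/
theorem stmt0 (n : ℕ) (M : Matrix (Fin n) (Fin n) ℤ)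
    (hP : ∀ i : Fin n, ∃ a b : ℕ, a ≤ b ∧ b ≤ n ∧
      ∀ j : Fin n, M i j = if a ≤ (j : ℕ) ∧ (j : ℕ) < b then 1 else 0) :
    M.det = -1 ∨ M.det = 0 ∨ M.det = 1 := by
  choose a b hab hbn hM using hP
  set T : Matrix (Fin n) (Fin n) ℤ :=
    fun j k => (if (j : ℕ) = (k : ℕ) then 1 else 0)
      - (if (j : ℕ) + 1 = (k : ℕ) then 1 else 0) with hT
  have hTtri : T.BlockTriangular id := by
    intro j k h
    simp only [id_eq] at h
    have hk : (k : ℕ) < (j : ℕ) := h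
    rw [hT]
    dsimp only
    rw [if_neg (by omega), if_neg (by omega)]
    ring
  have hTdet : T.det = 1 := by
    rw [Matrix.det_of_upperTriangular hTtri]
    have : ∀ j : Fin n, T j j = 1 := by
      intro j
      rw [hT]
      dsimp only
      rw [if_pos rfl, if_neg (by omega)]
      ring
    simp [this]
  have hD : ∀ i k, (M * T) i k =
      (if (k : ℕ) = a i then 1 else 0) - (if (k : ℕ) = b i then 1 else 0) := by
    intro i k
    have h1 : ∑ j : Fin n, M i j * (if (j : ℕ) = (k : ℕ) then (1:ℤ) else 0) = M i k := by
      rw [Finset.sum_eq_single k]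
      · rw [if_pos rfl, mul_one]
      · intro j _ hj
        rw [if_neg (fun h => hj (Fin.ext h)), mul_zero]
      · intro h; exact absurd (Finset.mem_univ k) h
    have h2 : ∑ j : Fin n, M i j * (if (j : ℕ) + 1 = (k : ℕ) then (1:ℤ) else 0) =
        if h : 1 ≤ (k : ℕ) then M i ⟨(k : ℕ) - 1, by omega⟩ else 0 := by
      by_cases hk : 1 ≤ (k : ℕ)
      · rw [dif_pos hk]
        rw [Finset.sum_eq_single (⟨(k : ℕ) - 1, by omega⟩ : Fin n)]
        · rw [if_pos (by simp; omega), mul_one]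
        · intro j _ hj
          rw [if_neg (fun h => hj (Fin.ext (by simp; omega))), mul_zero]
        · intro h; exact absurd (Finset.mem_univ _) h
      · rw [dif_neg hk]
        apply Finset.sum_eq_zero
        intro j _
        rw [if_neg (by omega), mul_zero]
    have : (M * T) i k = M i k - (if h : 1 ≤ (k : ℕ) then M i ⟨(k : ℕ) - 1, by omega⟩ else 0) := by
      rw [Matrix.mul_apply]
      calc ∑ j, M i j * T j k
          = ∑ j : Fin n, (M i j * (if (j : ℕ) = (k : ℕ) then (1:ℤ) else 0)
            - M i j * (if (j : ℕ) + 1 = (k : ℕ) then 1 else 0)) := by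
            refine Finset.sum_congr rfl fun j _ => ?_
            rw [hT]; ring
        _ = _ := by rw [Finset.sum_sub_distrib, h1, h2]
    rw [this, hM i k]
    have hka := hab i
    have hkb := hbn i
    have hkn := k.isLt
    by_cases hk : 1 ≤ (k : ℕ)
    · rw [dif_pos hk, hM i ⟨(k : ℕ) - 1, by omega⟩]
      simp only
      split_ifs <;> omega
    · rw [dif_neg hk]
      split_ifs <;> omega
  have := aux n (M * T) (fun i => ⟨a i, b i, fun j => hD i j⟩)
  rw [Matrix.det_mul, hTdet, mul_one] at this
  exact this
end

section
/- Let λ and μ be partitions (padded with zeros to length n) and k ≥ 0. If μ is not contained in λ (i.e., λ_i < μ_i for some i), then the determinant of the k-Petrie matrix Pet_k(λ,μ) is 0. -/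
/-- If `μ ⊄ λ` (i.e. `λ_i < μ_i` for some `i`), then `det (Pet_k(λ,μ)) = 0`.
Rows and columns are 1-indexed via `(i : ℕ) + 1` for `i : Fin n`. -/
theorem stmt4 (n k : ℕ) (lam mu : Fin n → ℕ)
    (hlam : ∀ i j : Fin n, i ≤ j → lam j ≤ lam i)
    (hmu : ∀ i j : Fin n, i ≤ j → mu j ≤ mu i)
    (h : ∃ i : Fin n, lam i < mu i) :
    (Matrix.of fun i j : Fin n =>
      if (0 : ℤ) ≤ (lam i : ℤ) - ((i : ℕ) + 1) - (mu j : ℤ) + ((j : ℕ) + 1) ∧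
         (lam i : ℤ) - ((i : ℕ) + 1) - (mu j : ℤ) + ((j : ℕ) + 1) < k
      then (1 : ℤ) else 0).det = 0 := by
  obtain ⟨i, hi⟩ := h
  rw [Matrix.det_apply]
  apply Finset.sum_eq_zero
  intro σ _
  -- find a column c ≤ i with σ c ≥ i
  have key : ∃ c : Fin n, c ≤ i ∧ i ≤ σ c := by
    by_contra hc
    push_neg at hc
    have hinj : Set.InjOn σ (Finset.Iic i : Finset (Fin n)) :=
      fun a _ b _ hab => σ.injective hab
    have hmaps : ∀ a ∈ (Finset.Iic i : Finset (Fin n)),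
        σ a ∈ (Finset.Iio i : Finset (Fin n)) := by
      intro a ha
      simp only [Finset.mem_Iic] at ha
      simp only [Finset.mem_Iio]
      exact hc a ha
    have hcard := Finset.card_le_card_of_injOn σ hmaps hinj
    rw [Fin.card_Iic, Fin.card_Iio] at hcard
    omega
  obtain ⟨c, hci, hsci⟩ := key
  have hzero : (Matrix.of fun i j : Fin n =>
      if (0 : ℤ) ≤ (lam i : ℤ) - ((i : ℕ) + 1) - (mu j : ℤ) + ((j : ℕ) + 1) ∧
         (lam i : ℤ) - ((i : ℕ) + 1) - (mu j : ℤ) + ((j : ℕ) + 1) < k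
      then (1 : ℤ) else 0) (σ c) c = 0 := by
    have h1 : lam (σ c) ≤ lam i := hlam i (σ c) hsci
    have h2 : mu i ≤ mu c := hmu c i hci
    have h3 : (i : ℕ) ≤ ((σ c : Fin n) : ℕ) := hsci
    have h4 : (c : ℕ) ≤ (i : ℕ) := hci
    simp only [Matrix.of_apply, ite_eq_right_iff, and_imp]
    intro h5 h6
    exfalso
    omega
  have hp : (∏ j : Fin n, (Matrix.of fun i j : Fin n =>
      if (0 : ℤ) ≤ (lam i : ℤ) - ((i : ℕ) + 1) - (mu j : ℤ) + ((j : ℕ) + 1) ∧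
         (lam i : ℤ) - ((i : ℕ) + 1) - (mu j : ℤ) + ((j : ℕ) + 1) < k
      then (1 : ℤ) else 0) (σ j) j) = 0 := by
    refine Finset.prod_eq_zero (Finset.mem_univ c) ?_
    exact hzero
  rw [hp, smul_zero]
end

section
/- Let λ and μ be partitions padded to length n and k ≥ 0. If λ_i ≥ μ_i + k for some i, then det(Pet_k(λ,μ)) = 0. -/
/-- If `λ_i ≥ μ_i + k` for some `i`, then `det (Pet_k(λ,μ)) = 0`.
Rows and columns are 1-indexed via `(i : ℕ) + 1` for `i : Fin n`. -/
theorem stmt5 (n k : ℕ) (lam mu : Fin n → ℕ)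
    (hlam : ∀ i j : Fin n, i ≤ j → lam j ≤ lam i)
    (hmu : ∀ i j : Fin n, i ≤ j → mu j ≤ mu i)
    (h : ∃ i : Fin n, mu i + k ≤ lam i) :
    (Matrix.of fun i j : Fin n =>
      if (0 : ℤ) ≤ (lam i : ℤ) - ((i : ℕ) + 1) - (mu j : ℤ) + ((j : ℕ) + 1) ∧
         (lam i : ℤ) - ((i : ℕ) + 1) - (mu j : ℤ) + ((j : ℕ) + 1) < k
      then (1 : ℤ) else 0).det = 0 := by
  obtain ⟨i, hi⟩ := h
  rw [Matrix.det_apply]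
  apply Finset.sum_eq_zero
  intro σ _
  -- pigeonhole: there is j ≥ i with σ j ≤ i
  have hpig : ∃ j : Fin n, i ≤ j ∧ σ j ≤ i := by
    by_contra hc
    push_neg at hc
    have hmaps : ∀ j ∈ Finset.Ici i, σ j ∈ Finset.Ioi i := by
      intro j hj
      simp only [Finset.mem_Ici] at hj
      simp only [Finset.mem_Ioi]
      exact hc j hj
    have hinj : Set.InjOn σ (Finset.Ici i) := fun a _ b _ hab => σ.injective hab
    have := Finset.card_le_card_of_injOn σ hmaps hinj
    rw [Fin.card_Ici, Fin.card_Ioi] at this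
    have hin : (i : ℕ) < n := i.isLt
    omega
  obtain ⟨j, hij, hsj⟩ := hpig
  have hz : (Matrix.of fun i j : Fin n =>
      if (0 : ℤ) ≤ (lam i : ℤ) - ((i : ℕ) + 1) - (mu j : ℤ) + ((j : ℕ) + 1) ∧
         (lam i : ℤ) - ((i : ℕ) + 1) - (mu j : ℤ) + ((j : ℕ) + 1) < k
      then (1 : ℤ) else 0) (σ j) j = 0 := by
    have h1 : lam i ≤ lam (σ j) := hlam (σ j) i hsj
    have h2 : mu j ≤ mu i := hmu i j hij
    have h3 : ((σ j : ℕ) : ℤ) ≤ (i : ℕ) := by exact_mod_cast hsj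
    have h4 : ((i : ℕ) : ℤ) ≤ (j : ℕ) := by exact_mod_cast hij
    have hk : (k : ℤ) ≤ (lam (σ j) : ℤ) - ((σ j : ℕ) + 1) - (mu j : ℤ) + ((j : ℕ) + 1) := by
      have : (mu i : ℤ) + k ≤ lam i := by exact_mod_cast hi
      have h1' : (lam i : ℤ) ≤ lam (σ j) := by exact_mod_cast h1
      have h2' : (mu j : ℤ) ≤ mu i := by exact_mod_cast h2
      linarith
    simp only [Matrix.of_apply]
    rw [if_neg]
    rintro ⟨-, hlt⟩
    linarith
  have hp : (∏ x : Fin n, (Matrix.of fun i j : Fin n =>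
      if (0 : ℤ) ≤ (lam i : ℤ) - ((i : ℕ) + 1) - (mu j : ℤ) + ((j : ℕ) + 1) ∧
         (lam i : ℤ) - ((i : ℕ) + 1) - (mu j : ℤ) + ((j : ℕ) + 1) < k
      then (1 : ℤ) else 0) (σ x) x) = 0 :=
    Finset.prod_eq_zero (Finset.mem_univ j) hz
  rw [hp, smul_zero]
end

section
/- Let λ, μ be partitions of length at most n = p + q such that λ_{p+1} − (p+1) < μ_p − p (i.e., the skew shape λ/μ decomposes into two disconnected skew pieces after row p). Then det(Pet_k(λ,μ)) equals the product of the determinant of the upper-left p×p block and the determinant of the lower-right q×q block of Pet_k(λ,μ), where the upper-left block is Pet_k((λ_1,…,λ_p),(μ_1,…,μ_p)) and the lower-right block is Pet_k of the shifted tails. -/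
/-- If `λ_{p+1} − (p+1) < μ_p − p`, so that the skew shape splits after row `p`,
then `det (Pet_k(λ,μ))` is the product of the determinants of the upper-left
`p × p` block and the lower-right `q × q` block.  Indices are 1-indexed via
`(i : ℕ) + 1` for `i : Fin (p + q)`. -/
theorem stmt6 (p q k : ℕ) (hp : 1 ≤ p) (hq : 1 ≤ q)
    (lam mu : Fin (p + q) → ℕ)
    (hlam : ∀ i j : Fin (p + q), i ≤ j → lam j ≤ lam i)
    (hmu : ∀ i j : Fin (p + q), i ≤ j → mu j ≤ mu i)
    (hsep : (lam ⟨p, by omega⟩ : ℤ) - ((p : ℤ) + 1) <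
            (mu ⟨p - 1, by omega⟩ : ℤ) - (p : ℤ)) :
    let M : Matrix (Fin (p + q)) (Fin (p + q)) ℤ := Matrix.of fun i j =>
      if (0 : ℤ) ≤ (lam i : ℤ) - ((i : ℕ) + 1) - (mu j : ℤ) + ((j : ℕ) + 1) ∧
         (lam i : ℤ) - ((i : ℕ) + 1) - (mu j : ℤ) + ((j : ℕ) + 1) < k
      then (1 : ℤ) else 0
    M.det = (M.submatrix (Fin.castAdd q) (Fin.castAdd q)).det *
            (M.submatrix (Fin.natAdd p) (Fin.natAdd p)).det := by
  intro M
  have hz : ∀ (i : Fin q) (j : Fin p), M (Fin.natAdd p i) (Fin.castAdd q j) = 0 := by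
    intro i j
    have h1 : lam (Fin.natAdd p i) ≤ lam ⟨p, by omega⟩ :=
      hlam _ _ (by simp [Fin.le_def])
    have h2 : mu ⟨p - 1, by omega⟩ ≤ mu (Fin.castAdd q j) :=
      hmu _ _ (by simp [Fin.le_def]; omega)
    have hci : ((Fin.natAdd p i : Fin (p + q)) : ℕ) = p + i := rfl
    have hj : (j : ℕ) < p := j.isLt
    simp only [M, Matrix.of_apply]
    rw [if_neg]
    rintro ⟨h, -⟩
    rw [hci] at h
    have hcj' : ((Fin.castAdd q j : Fin (p + q)) : ℕ) = j := rfl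
    rw [hcj'] at h
    omega
  rw [← Matrix.det_submatrix_equiv_self finSumFinEquiv M]
  have heq : M.submatrix finSumFinEquiv finSumFinEquiv =
      Matrix.fromBlocks (M.submatrix (Fin.castAdd q) (Fin.castAdd q))
        (M.submatrix (Fin.castAdd q) (Fin.natAdd p))
        0 (M.submatrix (Fin.natAdd p) (Fin.natAdd p)) := by
    ext i j
    cases i <;> cases j <;>
      simp [Matrix.fromBlocks, finSumFinEquiv_apply_left, finSumFinEquiv_apply_right, hz]
  rw [heq, Matrix.det_fromBlocks_zero₂₁]
end

section
/- Let P be an n×n Petrie matrix and suppose σ is the unique good orientation of P. Then det(P) = (−1)^{|σ| + inv(τ_σ)}, where τ_σ is the permutation sending i to c_{i+1} determined by the tails c_1,…,c_n of the oriented rows. -/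
section helpers

lemma my_sign_eq_signAux {n : ℕ} (f : Equiv.Perm (Fin n)) :
    Equiv.Perm.sign f = Equiv.Perm.signAux f := by
  refine Equiv.Perm.swap_induction_on f ?_ ?_
  · simp [Equiv.Perm.signAux_one]
  · intro g x y hxy ih
    rw [Equiv.Perm.signAux_mul, Equiv.Perm.signAux_swap hxy, map_mul,
      Equiv.Perm.sign_swap hxy, ih]

lemma my_sign_pow {n : ℕ} (f : Equiv.Perm (Fin n)) :
    (Equiv.Perm.sign f : ℤ) =
      (-1) ^ (Finset.univ.filter fun p : Fin n × Fin n =>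
        p.1 < p.2 ∧ f p.2 < f p.1).card := by
  rw [my_sign_eq_signAux]
  unfold Equiv.Perm.signAux
  rw [Finset.prod_ite, Finset.prod_const, Finset.prod_const_one, mul_one]
  have hcard : ((Equiv.Perm.finPairsLT n).filter fun x => f x.1 ≤ f x.2).card =
      (Finset.univ.filter fun p : Fin n × Fin n => p.1 < p.2 ∧ f p.2 < f p.1).card := by
    refine Finset.card_nbij' (fun x => (x.2, x.1)) (fun p => ⟨p.2, p.1⟩) ?_ ?_ ?_ ?_
    · intro x hx
      rw [Finset.mem_coe, Finset.mem_filter, Equiv.Perm.mem_finPairsLT] at hx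
      rw [Finset.mem_coe, Finset.mem_filter]
      refine ⟨Finset.mem_univ _, hx.1, lt_of_le_of_ne hx.2 ?_⟩
      intro h
      exact absurd (f.injective h) (ne_of_lt hx.1).symm
    · intro p hp
      rw [Finset.mem_coe, Finset.mem_filter] at hp
      rw [Finset.mem_coe, Finset.mem_filter, Equiv.Perm.mem_finPairsLT]
      exact ⟨hp.2.1, le_of_lt hp.2.2⟩
    · intro x _; rfl
    · intro p _; rfl
  rw [hcard]
  push_cast
  rfl

lemma my_aux_sum {n : ℕ} (c : ℕ) (j : Fin n) :
    (∑ k : Fin n, (if (k : ℕ) = c then (1:ℤ) else 0) * (if k ≤ j then 1 else 0)) =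
      if c ≤ (j : ℕ) then 1 else 0 := by
  rcases lt_or_ge c n with h | h
  · rw [Finset.sum_eq_single (⟨c, h⟩ : Fin n)]
    · simp [Fin.le_def]
    · intro k _ hk
      have : (k : ℕ) ≠ c := fun hc => hk (Fin.ext hc)
      simp [this]
    · simp
  · rw [Finset.sum_eq_zero, eq_comm, if_neg (by omega)]
    intro k _
    have : (k : ℕ) ≠ c := by omega
    simp [this]

end helpers

/-- If an `n × n` Petrie matrix `P` (rows `v[a_i, b_i]`, ones in 0-indexed columns
`a_i ≤ j < b_i`) has a unique good orientation `σ` (tails `c_i ∈ {a_i,b_i}` forming a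
permutation of `0,…,n−1`), then `det P = (−1)^{|σ| + inv(τ_σ)}` where
`|σ| = #{i : c_i > d_i}` and `inv(τ_σ) = #{(i,j) : i < j, c_i > c_j}`. -/
theorem stmt9 (n : ℕ) (a b : Fin n → ℕ)
    (hab : ∀ i, a i ≤ b i) (hb : ∀ i, b i ≤ n)
    (P : Matrix (Fin n) (Fin n) ℤ)
    (hP : ∀ i j, P i j = if a i ≤ (j : ℕ) ∧ (j : ℕ) < b i then 1 else 0)
    (σ : Fin n → Bool)
    (hgood : Function.Injective (fun i => if σ i then b i else a i) ∧
      ∀ i, (if σ i then b i else a i) < n)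
    (huniq : ∀ σ' : Fin n → Bool,
      (Function.Injective (fun i => if σ' i then b i else a i) ∧
        ∀ i, (if σ' i then b i else a i) < n) → σ' = σ) :
    P.det = (-1 : ℤ) ^
      ((Finset.univ.filter fun i : Fin n =>
          (if σ i then a i else b i) < (if σ i then b i else a i)).card +
       (Finset.univ.filter fun pij : Fin n × Fin n => pij.1 < pij.2 ∧
          (if σ pij.2 then b pij.2 else a pij.2) <
          (if σ pij.1 then b pij.1 else a pij.1)).card) := by
  -- a i ≠ b i
  have hne : ∀ i, a i ≠ b i := by
    intro i h
    have heqj : ∀ j, (if (Function.update σ i (!σ i)) j then b j else a j)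
        = (if σ j then b j else a j) := by
      intro j
      by_cases hj : j = i
      · subst hj; rw [Function.update_self]; cases σ j <;> simp [h]
      · rw [Function.update_of_ne hj]
    have hgood' : (Function.Injective
          (fun j => if (Function.update σ i (!σ i)) j then b j else a j) ∧
        ∀ j, (if (Function.update σ i (!σ i)) j then b j else a j) < n) := by
      constructor
      · intro x y hxy
        apply hgood.1
        simpa only [heqj] using hxy
      · intro j; rw [heqj]; exact hgood.2 j
    have := congrFun (huniq _ hgood') i
    rw [Function.update_self] at this
    cases hσ : σ i <;> rw [hσ] at this <;> simp at this
  have hlt : ∀ i, a i < b i := fun i => lt_of_le_of_ne (hab i) (hne i)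
  -- the permutation τ
  have hfinj : Function.Injective
      (fun i : Fin n => (⟨if σ i then b i else a i, hgood.2 i⟩ : Fin n)) := by
    intro i j hij
    exact hgood.1 (by simpa [Fin.mk.injEq] using hij)
  let τ : Equiv.Perm (Fin n) :=
    Equiv.ofBijective _ (Finite.injective_iff_bijective.mp hfinj)
  have hτ : ∀ i, (τ i : ℕ) = if σ i then b i else a i := fun i => rfl
  -- the matrices D and U
  set D : Matrix (Fin n) (Fin n) ℤ := fun i k =>
    (if (k : ℕ) = a i then 1 else 0) - (if (k : ℕ) = b i then 1 else 0) with hD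
  set U : Matrix (Fin n) (Fin n) ℤ := fun k j => if k ≤ j then 1 else 0 with hU
  have hDa : ∀ i k, D i k =
      (if (k : ℕ) = a i then 1 else 0) - (if (k : ℕ) = b i then 1 else 0) :=
    fun i k => rfl
  have hUa : ∀ k j, U k j = if k ≤ j then (1:ℤ) else 0 := fun k j => rfl
  have hPDU : P = D * U := by
    ext i j
    rw [hP, Matrix.mul_apply]
    have hterm : ∀ k, D i k * U k j =
        (if (k : ℕ) = a i then (1:ℤ) else 0) * (if k ≤ j then 1 else 0)
          - (if (k : ℕ) = b i then (1:ℤ) else 0) * (if k ≤ j then 1 else 0) := by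
      intro k; rw [hDa, hUa]; ring
    rw [Finset.sum_congr rfl fun k _ => hterm k, Finset.sum_sub_distrib,
      my_aux_sum, my_aux_sum]
    have := hab i
    split_ifs <;> omega
  have hdetU : U.det = 1 := by
    have htri : U.BlockTriangular id := by
      intro k j hkj
      rw [hUa]
      exact if_neg (not_le_of_gt hkj)
    rw [Matrix.det_of_upperTriangular htri]
    simp [hUa]
  -- det P = det D
  have hPD : P.det = D.det := by
    rw [hPDU, Matrix.det_mul, hdetU, mul_one]
  -- evaluate det D
  rw [hPD, ← Matrix.det_transpose, Matrix.det_apply]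
  rw [Finset.sum_eq_single τ]
  · -- the main term
    have hprod : (∏ i, D.transpose (τ i) i) = ∏ i, (if σ i then (-1:ℤ) else 1) := by
      refine Finset.prod_congr rfl fun i _ => ?_
      rw [Matrix.transpose_apply, hDa]
      have hci := hτ i
      cases hσ : σ i
      · have h1 : (τ i : ℕ) = a i := by rw [hci, hσ]; simp
        rw [h1, if_pos rfl, if_neg (hne i)]; simp
      · have h1 : (τ i : ℕ) = b i := by rw [hci, hσ]; simp
        rw [h1, if_neg (Ne.symm (hne i)), if_pos rfl]; simp
    rw [hprod, Finset.prod_ite, Finset.prod_const, Finset.prod_const_one, mul_one]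
    have hfilt1 : (Finset.univ.filter fun i : Fin n => σ i = true) =
        (Finset.univ.filter fun i : Fin n =>
          (if σ i then a i else b i) < (if σ i then b i else a i)) := by
      refine Finset.filter_congr fun i _ => ?_
      cases hσ : σ i <;> simp [hσ, hlt i, not_lt_of_ge (hab i)]
    have hsign := my_sign_pow τ
    have hfilt2 : (Finset.univ.filter fun p : Fin n × Fin n =>
          p.1 < p.2 ∧ τ p.2 < τ p.1) =
        (Finset.univ.filter fun pij : Fin n × Fin n => pij.1 < pij.2 ∧
          (if σ pij.2 then b pij.2 else a pij.2) <
          (if σ pij.1 then b pij.1 else a pij.1)) := by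
      refine Finset.filter_congr fun p _ => ?_
      simp only [Fin.lt_def, hτ]
    rw [hfilt2] at hsign
    rw [hfilt1, Units.smul_def, smul_eq_mul, hsign, ← pow_add, add_comm]
  · -- other permutations contribute zero
    intro π _ hπ
    have hzero : (∏ i, D.transpose (π i) i) = 0 := by
      by_contra hprod
      have hnz : ∀ i, D i (π i) ≠ 0 := by
        intro i hz
        exact hprod (Finset.prod_eq_zero (Finset.mem_univ i)
          (by rw [Matrix.transpose_apply]; exact hz))
      set σ' : Fin n → Bool := fun i => decide ((π i : ℕ) = b i) with hσ'
      have hcπ : ∀ i, (if σ' i then b i else a i) = (π i : ℕ) := by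
        intro i
        have hval : (π i : ℕ) = a i ∨ (π i : ℕ) = b i := by
          by_contra hcon
          push_neg at hcon
          apply hnz i
          rw [hDa, if_neg hcon.1, if_neg hcon.2]; ring
        rcases hval with h2 | h1
        · have hb1 : ¬ (π i : ℕ) = b i := by rw [h2]; exact hne i
          have hff : σ' i = false := by simp [hσ', hb1]
          rw [hff]; simpa using h2.symm
        · have hff : σ' i = true := by simp [hσ', h1]
          rw [hff]; simpa using h1.symm
      have hgood' : Function.Injective (fun i => if σ' i then b i else a i) ∧
          ∀ i, (if σ' i then b i else a i) < n := by
        constructor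
        · intro i j hij
          simp only [hcπ] at hij
          exact π.injective (Fin.ext hij)
        · intro i; rw [hcπ]; exact (π i).2
      have hσσ : σ' = σ := huniq σ' hgood'
      apply hπ
      ext i
      rw [← hcπ i, hσσ]
      exact (hτ i).symm
    rw [hzero, smul_zero]
  · intro h
    exact absurd (Finset.mem_univ τ) h
end

section
/- Let ν and μ be partitions with μ ⊆ ν. Then ν/μ is a horizontal strip (at most one cell in each column, equivalently ν_1 ≥ μ_1 ≥ ν_2 ≥ μ_2 ≥ …) if and only if for each j ≥ 0 there is exactly one index i with −μ_j + j ≤ −ν_i + i − 1 ≤ −μ_{j+1} + j (with the convention μ_0 = ∞), and in that case i = j+1. -/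
/-- For partitions `μ ⊆ ν` (1-indexed weakly decreasing functions `ℕ → ℕ`), the skew
shape `ν/μ` is a horizontal strip (`ν_{i+1} ≤ μ_i` for all `i ≥ 1`) iff for every
`j ≥ 0` there is exactly one index `i ≥ 1` with
`−μ_j + j ≤ −ν_i + i − 1 ≤ −μ_{j+1} + j` (the lower bound being vacuous for `j = 0`,
by the convention `μ_0 = ∞`); and in that case that index is `i = j + 1`. -/
theorem stmt12 (nu mu : ℕ → ℕ)
    (hnu : ∀ i, 1 ≤ i → nu (i + 1) ≤ nu i)
    (hmu : ∀ i, 1 ≤ i → mu (i + 1) ≤ mu i)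
    (hsub : ∀ i, 1 ≤ i → mu i ≤ nu i) :
    let Cond : ℕ → ℕ → Prop := fun j i =>
      (1 ≤ j → (j : ℤ) - mu j ≤ (i : ℤ) - 1 - nu i) ∧
      (i : ℤ) - 1 - nu i ≤ (j : ℤ) - mu (j + 1)
    ((∀ i, 1 ≤ i → nu (i + 1) ≤ mu i) ↔
      ∀ j : ℕ, ∃! i : ℕ, 1 ≤ i ∧ Cond j i) ∧
    ((∀ i, 1 ≤ i → nu (i + 1) ≤ mu i) →
      ∀ j i : ℕ, 1 ≤ i → Cond j i → i = j + 1) := by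
  intro Cond
  -- monotonicity of f i = i - 1 - nu i on i ≥ 1
  have fmon : ∀ i i' : ℕ, 1 ≤ i → i ≤ i' →
      (i : ℤ) - 1 - nu i ≤ (i' : ℤ) - 1 - nu i' := by
    intro i i' hi hle
    induction i' with
    | zero => omega
    | succ k ih =>
      rcases Nat.lt_or_ge i (k + 1) with h | h
      · have h1 := ih (by omega)
        have h2 : nu (k + 1) ≤ nu k := hnu k (by omega)
        push_cast at h1 ⊢
        omega
      · have : i = k + 1 := by omega
        subst this
        omega
  -- uniqueness of the witness, assuming horizontal strip
  have uniq : (∀ i, 1 ≤ i → nu (i + 1) ≤ mu i) →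
      ∀ j i : ℕ, 1 ≤ i → Cond j i → i = j + 1 := by
    intro HS j i hi hc
    obtain ⟨h1, h2⟩ := hc
    by_contra hne
    rcases Nat.lt_or_ge i (j + 1) with h | h
    · have hj : 1 ≤ j := by omega
      have ha := h1 hj
      have hb := fmon i j hi (by omega)
      have hd := hsub j hj
      omega
    · have hb := fmon (j + 2) i (by omega) (by omega)
      have hd : nu (j + 2) ≤ mu (j + 1) := HS (j + 1) (by omega)
      push_cast at hb
      omega
  refine ⟨⟨?_, ?_⟩, uniq⟩
  · intro HS j
    refine ⟨j + 1, ⟨by omega, ?_, ?_⟩, ?_⟩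
    · intro hj
      have := HS j hj
      push_cast
      omega
    · have := hsub (j + 1) (by omega)
      push_cast
      omega
    · rintro i ⟨hi, hc⟩
      exact uniq HS j i hi hc
  · intro H
    have claim : ∀ j, Cond j (j + 1) := by
      intro j
      induction j with
      | zero =>
        refine ⟨fun h => by omega, ?_⟩
        have := hsub 1 (by omega)
        push_cast
        omega
      | succ k ih =>
        have hnot : ¬ Cond k (k + 2) := by
          intro hc
          have := ExistsUnique.unique (H k) ⟨by omega, hc⟩ ⟨by omega, ih⟩
          omega
        have hmono : ((k : ℤ) + 1) - 1 - nu (k + 1) ≤ ((k : ℤ) + 2) - 1 - nu (k + 2) := by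
          have := fmon (k + 1) (k + 2) (by omega) (by omega)
          push_cast at this
          omega
        have hfirst : (1 ≤ k → (k : ℤ) - mu k ≤ ((k + 2 : ℕ) : ℤ) - 1 - nu (k + 2)) := by
          intro hk
          have := ih.1 hk
          push_cast at this ⊢
          omega
        have hsecond : ¬ (((k + 2 : ℕ) : ℤ) - 1 - nu (k + 2) ≤ (k : ℤ) - mu (k + 1)) :=
          fun hb => hnot ⟨hfirst, hb⟩
        push_cast at hsecond
        have e1 : nu (k + 1 + 1) = nu (k + 2) := rfl
        have e2 : mu (k + 1 + 1) = mu (k + 2) := rfl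
        constructor
        · intro _
          push_cast
          omega
        · have := hsub (k + 2) (by omega)
          push_cast
          omega
    intro i hi
    have hc := (claim i).1 hi
    push_cast at hc
    omega
end

section
/- Let π be a Motzkin path of length m satisfying the red-blue rule: marking each step blue if the number of horizontal steps up to and including it is even and red otherwise, at every prefix the number of red down-steps is at most the number of blue up-steps, and the number of blue down-steps is at most the number of red up-steps. Then among the lattice points (x,y) with y ≥ 0 lying strictly below the path, the number of points with x+y even equals the number of points with x+y odd. -/
/-- A step of a Motzkin path is blue if the number of horizontal steps up to and
including it is even, red otherwise. -/
def isBlue (s : ℕ → ℤ) (i : ℕ) : Bool :=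
  ((Finset.range (i + 1)).filter fun l => s l = 0).card % 2 == 0

namespace Stmt16Aux

lemma cnt_succ (p : ℕ → Prop) [DecidablePred p] (t : ℕ) :
    ((Finset.range (t+1)).filter p).card =
    ((Finset.range t).filter p).card + if p t then 1 else 0 := by
  rw [Finset.range_add_one, Finset.filter_insert]
  by_cases h : p t
  · simp [h, Finset.card_insert_of_notMem]
  · simp [h]

lemma col (x : ℕ) : ∀ n : ℕ,
    ((((Finset.range n).filter fun y => (x+y) % 2 = 0).card : ℤ)
    - (((Finset.range n).filter fun y => (x+y) % 2 = 1).card : ℤ))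
    = (-1)^x * ((n : ℤ) % 2) := by
  intro n
  induction n with
  | zero => simp
  | succ n ih =>
    rw [cnt_succ, cnt_succ]
    by_cases hp : (x+n) % 2 = 0
    · rw [if_pos hp, if_neg (by omega)]
      push_cast
      have hx : x % 2 = 0 ∧ n % 2 = 0 ∨ x % 2 = 1 ∧ n % 2 = 1 := by omega
      rcases hx with ⟨hx1, hn1⟩ | ⟨hx1, hn1⟩
      · have : ((-1:ℤ))^x = 1 := Even.neg_one_pow (Nat.even_iff.2 hx1)
        rw [this] at ih ⊢
        have h1 : ((n:ℤ)) % 2 = 0 := by omega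
        have h2 : ((n:ℤ) + 1) % 2 = 1 := by omega
        rw [h2]; rw [h1] at ih; linarith
      · have : ((-1:ℤ))^x = -1 := Odd.neg_one_pow (Nat.odd_iff.2 hx1)
        rw [this] at ih ⊢
        have h1 : ((n:ℤ)) % 2 = 1 := by omega
        have h2 : ((n:ℤ) + 1) % 2 = 0 := by omega
        rw [h2]; rw [h1] at ih; linarith
    · rw [if_neg hp, if_pos (by omega)]
      push_cast
      have hx : x % 2 = 0 ∧ n % 2 = 1 ∨ x % 2 = 1 ∧ n % 2 = 0 := by omega
      rcases hx with ⟨hx1, hn1⟩ | ⟨hx1, hn1⟩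
      · have : ((-1:ℤ))^x = 1 := Even.neg_one_pow (Nat.even_iff.2 hx1)
        rw [this] at ih ⊢
        have h1 : ((n:ℤ)) % 2 = 1 := by omega
        have h2 : ((n:ℤ) + 1) % 2 = 0 := by omega
        rw [h2]; rw [h1] at ih; linarith
      · have : ((-1:ℤ))^x = -1 := Odd.neg_one_pow (Nat.odd_iff.2 hx1)
        rw [this] at ih ⊢
        have h1 : ((n:ℤ)) % 2 = 0 := by omega
        have h2 : ((n:ℤ) + 1) % 2 = 1 := by omega
        rw [h2]; rw [h1] at ih; linarith

variable (s : ℕ → ℤ)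

/-- height -/
noncomputable def hgt (t : ℕ) : ℤ := ∑ i ∈ Finset.range t, s i

noncomputable def cUB (t : ℕ) : ℕ :=
  ((Finset.range t).filter fun i => s i = 1 ∧ isBlue s i = true).card
noncomputable def cUR (t : ℕ) : ℕ :=
  ((Finset.range t).filter fun i => s i = 1 ∧ isBlue s i = false).card
noncomputable def cDB (t : ℕ) : ℕ :=
  ((Finset.range t).filter fun i => s i = -1 ∧ isBlue s i = true).card
noncomputable def cDR (t : ℕ) : ℕ :=
  ((Finset.range t).filter fun i => s i = -1 ∧ isBlue s i = false).card
noncomputable def cH (t : ℕ) : ℕ :=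
  ((Finset.range t).filter fun i => s i = 0).card

lemma hgt_succ (t : ℕ) : hgt s (t+1) = hgt s t + s t := Finset.sum_range_succ _ _

lemma cH_succ (t : ℕ) : cH s (t+1) = cH s t + if s t = 0 then 1 else 0 := cnt_succ _ _

lemma isBlue_iff (t : ℕ) : isBlue s t = true ↔ cH s (t+1) % 2 = 0 := by
  simp [isBlue, cH]

/-- parity invariant: h(t) + t + H(t) is even. -/
lemma par (m : ℕ) (hstep : ∀ i < m, s i = 1 ∨ s i = 0 ∨ s i = -1) :
    ∀ t ≤ m, (hgt s t + t + cH s t) % 2 = 0 := by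
  intro t
  induction t with
  | zero => intro _; simp [hgt, cH]
  | succ t ih =>
    intro ht
    have ih' := ih (by omega)
    have hs := hstep t (by omega)
    rw [hgt_succ, cH_succ]
    rcases hs with h | h | h <;> rw [h] <;> push_cast <;> simp <;> omega

lemma hgt_le (m : ℕ) (hstep : ∀ i < m, s i = 1 ∨ s i = 0 ∨ s i = -1) :
    ∀ t ≤ m, hgt s t ≤ t := by
  intro t
  induction t with
  | zero => intro _; simp [hgt]
  | succ t ih =>
    intro ht
    have ih' := ih (by omega)
    have hs := hstep t (by omega)
    rw [hgt_succ]
    push_cast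
    rcases hs with h | h | h <;> rw [h] <;> linarith

/-- balance: uB + uR - dB - dR = h. -/
lemma balance (m : ℕ) (hstep : ∀ i < m, s i = 1 ∨ s i = 0 ∨ s i = -1) :
    ∀ t ≤ m, (cUB s t : ℤ) + cUR s t - cDB s t - cDR s t = hgt s t := by
  intro t
  induction t with
  | zero => intro _; simp [hgt, cUB, cUR, cDB, cDR]
  | succ t ih =>
    intro ht
    have ih' := ih (by omega)
    have hs := hstep t (by omega)
    rw [hgt_succ]
    rw [show cUB s (t+1) = cUB s t + if (s t = 1 ∧ isBlue s t = true) then 1 else 0 from cnt_succ _ _]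
    rw [show cUR s (t+1) = cUR s t + if (s t = 1 ∧ isBlue s t = false) then 1 else 0 from cnt_succ _ _]
    rw [show cDB s (t+1) = cDB s t + if (s t = -1 ∧ isBlue s t = true) then 1 else 0 from cnt_succ _ _]
    rw [show cDR s (t+1) = cDR s t + if (s t = -1 ∧ isBlue s t = false) then 1 else 0 from cnt_succ _ _]
    rcases hs with h | h | h <;> rcases Bool.eq_false_or_eq_true (isBlue s t) with hb | hb <;>
      simp [h, hb] <;> push_cast <;> omega

/-- the key invariant. -/
lemma key (m : ℕ) (hstep : ∀ i < m, s i = 1 ∨ s i = 0 ∨ s i = -1) :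
    ∀ t ≤ m,
    2 * (∑ x ∈ Finset.range (t+1), (-1:ℤ)^x * (hgt s x % 2)) =
      ((cUR s t : ℤ) - cDB s t) - ((cUB s t : ℤ) - cDR s t)
      + (-1)^t * (hgt s t % 2) := by
  intro t
  induction t with
  | zero =>
    intro _
    simp [hgt, cUB, cUR, cDB, cDR]
  | succ t ih =>
    intro ht
    have ih' := ih (by omega)
    have hs := hstep t (by omega)
    have hpar := par s m hstep t (by omega)
    rw [Finset.sum_range_succ]
    rw [show cUB s (t+1) = cUB s t + if (s t = 1 ∧ isBlue s t = true) then 1 else 0 from cnt_succ _ _]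
    rw [show cUR s (t+1) = cUR s t + if (s t = 1 ∧ isBlue s t = false) then 1 else 0 from cnt_succ _ _]
    rw [show cDB s (t+1) = cDB s t + if (s t = -1 ∧ isBlue s t = true) then 1 else 0 from cnt_succ _ _]
    rw [show cDR s (t+1) = cDR s t + if (s t = -1 ∧ isBlue s t = false) then 1 else 0 from cnt_succ _ _]
    rw [hgt_succ]
    have hcH := cH_succ s t
    have hmod2 : hgt s t % 2 = 0 ∨ hgt s t % 2 = 1 := Int.emod_two_eq_zero_or_one _
    rcases hs with h | h | h
    · -- step up
      have hcH' : cH s (t+1) = cH s t := by rw [hcH]; simp [h]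
      rcases Bool.eq_false_or_eq_true (isBlue s t) with hb | hb
      · have hHv : cH s t % 2 = 0 := by
          have h' := isBlue_iff s t
          rw [hb, hcH'] at h'
          simp at h'
          omega
        rcases hmod2 with hm | hm
        · have ht2 : t % 2 = 0 := by omega
          have hpt : (-1:ℤ)^t = 1 := Even.neg_one_pow (Nat.even_iff.2 ht2)
          have e2 : (-1:ℤ)^(t+1) = -1 := by rw [pow_succ, hpt]; norm_num
          have e1 : (hgt s t + (1 : ℤ)) % 2 = 1 := by omega
          rw [h, hb, e1, e2]
          rw [hpt, hm] at ih'
          norm_num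
          push_cast
          linarith [ih']
        · have ht2 : t % 2 = 1 := by omega
          have hpt : (-1:ℤ)^t = -1 := Odd.neg_one_pow (Nat.odd_iff.2 ht2)
          have e2 : (-1:ℤ)^(t+1) = 1 := by rw [pow_succ, hpt]; norm_num
          have e1 : (hgt s t + (1 : ℤ)) % 2 = 0 := by omega
          rw [h, hb, e1, e2]
          rw [hpt, hm] at ih'
          norm_num
          push_cast
          linarith [ih']
      · have hHv : cH s t % 2 = 1 := by
          have h' := isBlue_iff s t
          rw [hb, hcH'] at h'
          simp at h'
          omega
        rcases hmod2 with hm | hm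
        · have ht2 : t % 2 = 1 := by omega
          have hpt : (-1:ℤ)^t = -1 := Odd.neg_one_pow (Nat.odd_iff.2 ht2)
          have e2 : (-1:ℤ)^(t+1) = 1 := by rw [pow_succ, hpt]; norm_num
          have e1 : (hgt s t + (1 : ℤ)) % 2 = 1 := by omega
          rw [h, hb, e1, e2]
          rw [hpt, hm] at ih'
          norm_num
          push_cast
          linarith [ih']
        · have ht2 : t % 2 = 0 := by omega
          have hpt : (-1:ℤ)^t = 1 := Even.neg_one_pow (Nat.even_iff.2 ht2)
          have e2 : (-1:ℤ)^(t+1) = -1 := by rw [pow_succ, hpt]; norm_num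
          have e1 : (hgt s t + (1 : ℤ)) % 2 = 0 := by omega
          rw [h, hb, e1, e2]
          rw [hpt, hm] at ih'
          norm_num
          push_cast
          linarith [ih']
    · -- horizontal step
      have e1 : (hgt s t + (0:ℤ)) % 2 = hgt s t % 2 := by omega
      rw [h, e1]
      have e2 : (-1:ℤ)^(t+1) = -(-1:ℤ)^t := by rw [pow_succ]; ring
      rw [e2]
      norm_num
      rcases hmod2 with hm | hm <;> rw [hm] at ih' ⊢ <;> push_cast <;> linarith [ih']
    · -- step down
      have hcH' : cH s (t+1) = cH s t := by rw [hcH]; simp [h]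
      rcases Bool.eq_false_or_eq_true (isBlue s t) with hb | hb
      · have hHv : cH s t % 2 = 0 := by
          have h' := isBlue_iff s t
          rw [hb, hcH'] at h'
          simp at h'
          omega
        rcases hmod2 with hm | hm
        · have ht2 : t % 2 = 0 := by omega
          have hpt : (-1:ℤ)^t = 1 := Even.neg_one_pow (Nat.even_iff.2 ht2)
          have e2 : (-1:ℤ)^(t+1) = -1 := by rw [pow_succ, hpt]; norm_num
          have e1 : (hgt s t + (-1 : ℤ)) % 2 = 1 := by omega
          rw [h, hb, e1, e2]
          rw [hpt, hm] at ih'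
          norm_num
          push_cast
          linarith [ih']
        · have ht2 : t % 2 = 1 := by omega
          have hpt : (-1:ℤ)^t = -1 := Odd.neg_one_pow (Nat.odd_iff.2 ht2)
          have e2 : (-1:ℤ)^(t+1) = 1 := by rw [pow_succ, hpt]; norm_num
          have e1 : (hgt s t + (-1 : ℤ)) % 2 = 0 := by omega
          rw [h, hb, e1, e2]
          rw [hpt, hm] at ih'
          norm_num
          push_cast
          linarith [ih']
      · have hHv : cH s t % 2 = 1 := by
          have h' := isBlue_iff s t
          rw [hb, hcH'] at h'
          simp at h'
          omega
        rcases hmod2 with hm | hm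
        · have ht2 : t % 2 = 1 := by omega
          have hpt : (-1:ℤ)^t = -1 := Odd.neg_one_pow (Nat.odd_iff.2 ht2)
          have e2 : (-1:ℤ)^(t+1) = 1 := by rw [pow_succ, hpt]; norm_num
          have e1 : (hgt s t + (-1 : ℤ)) % 2 = 1 := by omega
          rw [h, hb, e1, e2]
          rw [hpt, hm] at ih'
          norm_num
          push_cast
          linarith [ih']
        · have ht2 : t % 2 = 0 := by omega
          have hpt : (-1:ℤ)^t = 1 := Even.neg_one_pow (Nat.even_iff.2 ht2)
          have e2 : (-1:ℤ)^(t+1) = -1 := by rw [pow_succ, hpt]; norm_num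
          have e1 : (hgt s t + (-1 : ℤ)) % 2 = 0 := by omega
          rw [h, hb, e1, e2]
          rw [hpt, hm] at ih'
          norm_num
          push_cast
          linarith [ih']
end Stmt16Aux

/-- Let `π` be a Motzkin path of length `m` (steps `s i ∈ {1, 0, −1}`, partial sums
nonnegative, total sum `0`) satisfying the red-blue rule: in every prefix the number
of red down-steps is at most the number of blue up-steps and the number of blue
down-steps is at most the number of red up-steps.  Then among lattice points
`(x, y)`, `0 ≤ x ≤ m`, `0 ≤ y` strictly below the path (`y <` height over `x`), the
number with `x + y` even equals the number with `x + y` odd. -/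
theorem stmt16 (m : ℕ) (s : ℕ → ℤ)
    (hstep : ∀ i < m, s i = 1 ∨ s i = 0 ∨ s i = -1)
    (hnonneg : ∀ t ≤ m, 0 ≤ ∑ i ∈ Finset.range t, s i)
    (hend : ∑ i ∈ Finset.range m, s i = 0)
    (hrb1 : ∀ t ≤ m,
      ((Finset.range t).filter fun i => s i = -1 ∧ isBlue s i = false).card ≤
      ((Finset.range t).filter fun i => s i = 1 ∧ isBlue s i = true).card)
    (hrb2 : ∀ t ≤ m,
      ((Finset.range t).filter fun i => s i = -1 ∧ isBlue s i = true).card ≤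
      ((Finset.range t).filter fun i => s i = 1 ∧ isBlue s i = false).card) :
    ((Finset.range (m + 1) ×ˢ Finset.range (m + 1)).filter fun p =>
        (p.2 : ℤ) < ∑ i ∈ Finset.range p.1, s i ∧ (p.1 + p.2) % 2 = 0).card =
    ((Finset.range (m + 1) ×ˢ Finset.range (m + 1)).filter fun p =>
        (p.2 : ℤ) < ∑ i ∈ Finset.range p.1, s i ∧ (p.1 + p.2) % 2 = 1).card := by
  classical
  open Stmt16Aux in
  have hA : ∑ x ∈ Finset.range (m+1), (-1:ℤ)^x * (hgt s x % 2) = 0 := by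
    have hk := key s m hstep m le_rfl
    have hb := balance s m hstep m le_rfl
    have h1 := hrb1 m le_rfl
    have h2 := hrb2 m le_rfl
    have hzero : hgt s m = 0 := hend
    have h1' : (cDR s m : ℤ) ≤ cUB s m := by exact_mod_cast h1
    have h2' : (cDB s m : ℤ) ≤ cUR s m := by exact_mod_cast h2
    rw [hzero] at hk hb
    simp at hk
    omega
  open Stmt16Aux in
  have hdec : ∀ r : ℕ,
      ((Finset.range (m + 1) ×ˢ Finset.range (m + 1)).filter fun p =>
        (p.2 : ℤ) < ∑ i ∈ Finset.range p.1, s i ∧ (p.1 + p.2) % 2 = r).card =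
      ∑ x ∈ Finset.range (m+1),
        (((Finset.range ((hgt s x).toNat)).filter fun y => (x + y) % 2 = r).card) := by
    intro r
    rw [Finset.card_filter]
    rw [Finset.sum_product]
    refine Finset.sum_congr rfl ?_
    intro x hx
    rw [← Finset.card_filter]
    congr 1
    have hxm : x ≤ m := by simpa using Nat.lt_succ_iff.mp (Finset.mem_range.mp hx)
    have hle : hgt s x ≤ x := hgt_le s m hstep x hxm
    have hnn : 0 ≤ hgt s x := hnonneg x hxm
    rw [show hgt s x = ∑ i ∈ Finset.range x, s i from rfl] at hle hnn ⊢
    ext y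
    simp only [Finset.mem_filter, Finset.mem_range]
    omega
  open Stmt16Aux in
  have hcol : ∀ x ∈ Finset.range (m+1),
      ((((Finset.range ((hgt s x).toNat)).filter fun y => (x+y) % 2 = 0).card : ℤ)
      - (((Finset.range ((hgt s x).toNat)).filter fun y => (x+y) % 2 = 1).card : ℤ))
      = (-1)^x * (hgt s x % 2) := by
    intro x hx
    have hxm : x ≤ m := by simpa using Nat.lt_succ_iff.mp (Finset.mem_range.mp hx)
    have hnn : 0 ≤ hgt s x := hnonneg x hxm
    rw [col x ((hgt s x).toNat)]
    congr 1
    rw [Int.toNat_of_nonneg hnn]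
  open Stmt16Aux in
  have hfinal :
      ((∑ x ∈ Finset.range (m+1),
        (((Finset.range ((hgt s x).toNat)).filter fun y => (x + y) % 2 = 0).card) : ℕ) : ℤ) =
      ((∑ x ∈ Finset.range (m+1),
        (((Finset.range ((hgt s x).toNat)).filter fun y => (x + y) % 2 = 1).card) : ℕ) : ℤ) := by
    push_cast
    have := Finset.sum_congr rfl hcol
    rw [Finset.sum_sub_distrib] at this
    rw [hA] at this
    linarith [this]
  rw [hdec 0, hdec 1]
  exact_mod_cast hfinal
end

section
/- Let τ be a permutation of {0,1,…,n−1} that is increasing on its set of excedance indices and increasing on its set of non-excedance indices (i.e., if i < j are both excedances then τ(i) < τ(j), and likewise for non-excedances). Then inv(τ) = Σ_{i : τ(i) > i} (τ(i) − i). -/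
open Finset

/-- If a permutation `τ` of `{0,…,n−1}` is increasing on its excedance indices and
increasing on its non-excedance indices, then
`inv(τ) = Σ_{i : τ(i) > i} (τ(i) − i)`. -/
theorem stmt17 (n : ℕ) (τ : Equiv.Perm (Fin n))
    (hexc : ∀ i j : Fin n, i < j → i < τ i → j < τ j → τ i < τ j)
    (hnexc : ∀ i j : Fin n, i < j → τ i ≤ i → τ j ≤ j → τ i < τ j) :
    (Finset.univ.filter fun p : Fin n × Fin n => p.1 < p.2 ∧ τ p.2 < τ p.1).card =
    ∑ i ∈ Finset.univ.filter (fun i : Fin n => i < τ i), ((τ i : ℕ) - (i : ℕ)) := by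
  classical
  set c : Fin n → ℕ := fun i => (univ.filter fun j : Fin n => i < j ∧ τ j < τ i).card with hc
  have hlow : ∀ i j : Fin n, j < i → i < τ i → τ j < τ i := by
    intro i j hji hi
    by_cases h : j < τ j
    · exact hexc j i hji h hi
    · push_neg at h
      calc (τ j : Fin n) ≤ j := h
        _ < i := hji
        _ < τ i := hi
  have hzero : ∀ i : Fin n, ¬ i < τ i → c i = 0 := by
    intro i hi
    rw [hc]
    simp only [card_eq_zero, filter_eq_empty_iff]
    rintro j - ⟨hij, hji⟩
    push_neg at hi
    by_cases h : j < τ j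
    · exact absurd (lt_trans (lt_of_le_of_lt hi hij) h) (not_lt.mpr hji.le)
    · exact absurd (hnexc i j hij hi (not_lt.1 h)) (not_lt.mpr hji.le)
  have hval : ∀ i : Fin n, i < τ i → c i = (τ i : ℕ) - (i : ℕ) := by
    intro i hi
    have hS : (univ.filter fun j : Fin n => τ j < τ i).card = (τ i : ℕ) := by
      rw [← Fin.card_Iio (τ i)]
      apply card_bij (fun j _ => τ j)
      · intro j hj; simp only [mem_filter] at hj; simpa using hj.2
      · intro a _ b _ h; exact τ.injective h
      · intro b hb; exact ⟨τ.symm b, by simpa using hb, by simp⟩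
    have hsplit := card_filter_add_card_filter_not
      (s := univ.filter fun j : Fin n => τ j < τ i) (p := fun j => i < j)
    have h1 : ((univ.filter fun j : Fin n => τ j < τ i).filter fun j => i < j) =
        univ.filter fun j : Fin n => i < j ∧ τ j < τ i := by
      rw [filter_filter]; congr 1; ext j; tauto
    have h2 : ((univ.filter fun j : Fin n => τ j < τ i).filter fun j => ¬ i < j) =
        Finset.Iio i := by
      ext j
      simp only [mem_filter, mem_univ, true_and, not_lt, Finset.mem_Iio]
      constructor
      · rintro ⟨ha, hb⟩
        rcases lt_or_eq_of_le hb with h | h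
        · exact h
        · subst h; exact absurd ha (lt_irrefl _)
      · intro h; exact ⟨hlow i j h hi, h.le⟩
    rw [h1, h2, hS, Fin.card_Iio] at hsplit
    show (univ.filter fun j : Fin n => i < j ∧ τ j < τ i).card = (τ i : ℕ) - (i : ℕ)
    omega
  have hcard : (Finset.univ.filter fun p : Fin n × Fin n => p.1 < p.2 ∧ τ p.2 < τ p.1).card
      = ∑ i : Fin n, c i := by
    rw [card_eq_sum_card_fiberwise (f := Prod.fst) (t := univ) (fun x _ => mem_univ _)]
    refine sum_congr rfl fun i _ => ?_
    apply card_bij (fun p _ => p.2)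
    · intro p hp; simp only [mem_filter, mem_univ, true_and] at hp ⊢
      obtain ⟨⟨ha, hb⟩, h3⟩ := hp
      subst h3; exact ⟨ha, hb⟩
    · intro a ha b hb h
      simp only [mem_filter] at ha hb
      exact Prod.ext (ha.2.trans hb.2.symm) h
    · intro b hb
      simp only [mem_filter, mem_univ, true_and] at hb
      exact ⟨(i, b), by simp [hb.1, hb.2], rfl⟩
  rw [hcard]
  calc ∑ i : Fin n, c i
      = ∑ i ∈ univ.filter (fun i : Fin n => i < τ i), c i :=
        (sum_subset (filter_subset _ _) (fun i _ hi => hzero i (by simpa using hi))).symm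
    _ = ∑ i ∈ univ.filter (fun i : Fin n => i < τ i), ((τ i : ℕ) - (i : ℕ)) :=
        sum_congr rfl fun i hi => hval i (by simpa using (mem_filter.1 hi).2)
end
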